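/- Let (Ω,T) be a dynamical system, L > 0, N ∈ ℕ. The set of continuous cocycles A : Ω → SL(2,R) satisfying sup over ω ∈ Ω and n ≥ N of (1/n) log‖A_n(ω)‖ < L is open in C(Ω, SL(2,R)) with the uniform topology. -/

import Mathlib

open scoped Matrix.Norms.L2Operator
open Filter Topology MeasureTheory

noncomputable abbrev SL2 := Matrix.SpecialLinearGroup (Fin 2) ℝ

noncomputable instance : MetricSpace SL2 :=
  MetricSpace.induced (fun B => (B : Matrix (Fin 2) (Fin 2) ℝ))
    (fun _ _ h => Subtype.ext h) inferInstance

/-- The `n`-step cocycle iterate `A_n(ω) = A(T^{n-1}ω) ⋯ A(ω)`. -/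
noncomputable def coc {Ω : Type*} (T : Ω → Ω) (A : Ω → SL2) : ℕ → Ω → SL2
  | 0, _ => 1
  | n + 1, ω => coc T A n (T ω) * A ω

/-- `log ‖A_n(ω)‖`, using the operator norm on 2×2 real matrices. -/
noncomputable def cocNorm {Ω : Type*} (T : Ω → Ω) (A : Ω → SL2) (n : ℕ) (ω : Ω) : ℝ :=
  Real.log ‖(coc T A n ω : Matrix (Fin 2) (Fin 2) ℝ)‖

/-- Uniform hyperbolicity: `liminf (1/n) log ‖A_n(ω)‖ ≥ L > 0` uniformly in `ω`. -/
def UniformlyHyperbolic {Ω : Type*} (T : Ω → Ω) (A : Ω → SL2) : Prop :=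
  ∃ L > (0 : ℝ), ∀ ε > (0 : ℝ), ∃ N : ℕ, ∀ n ≥ N, ∀ ω,
    L - ε < (1 / n : ℝ) * cocNorm T A n ω

/-- `(1/n) log ‖A_n(ω)‖ → L` uniformly in `ω`. -/
def TendsUniformlyToConst {Ω : Type*} (T : Ω → Ω) (A : Ω → SL2) (L : ℝ) : Prop :=
  ∀ ε > (0 : ℝ), ∃ N : ℕ, ∀ n ≥ N, ∀ ω,
    |(1 / n : ℝ) * cocNorm T A n ω - L| < ε

/-- A uniform cocycle. -/
def IsUniformCocycle {Ω : Type*} (T : Ω → Ω) (A : Ω → SL2) : Prop :=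
  ∃ L : ℝ, TendsUniformlyToConst T A L

/-- Uniform behavior: uniformly hyperbolic, or `(1/n) log ‖A_n(ω)‖ → 0` uniformly. -/
def HasUniformBehavior {Ω : Type*} (T : Ω → Ω) (A : Ω → SL2) : Prop :=
  UniformlyHyperbolic T A ∨ TendsUniformlyToConst T A 0

lemma sl2_coe_ne_zero (M : SL2) : (M : Matrix (Fin 2) (Fin 2) ℝ) ≠ 0 := by
  intro h
  have := M.2
  rw [h] at this
  simp at this

lemma sl2_norm_pos (M : SL2) : 0 < ‖(M : Matrix (Fin 2) (Fin 2) ℝ)‖ :=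
  norm_pos_iff.mpr (sl2_coe_ne_zero M)

lemma coc_add {Ω : Type*} (T : Ω → Ω) (A : Ω → SL2) (m n : ℕ) (ω : Ω) :
    coc T A (m + n) ω = coc T A m (T^[n] ω) * coc T A n ω := by
  induction n generalizing ω with
  | zero => simp [coc]
  | succ n ih =>
      show coc T A (m + n + 1) ω = _
      rw [show m + n + 1 = (m + n) + 1 from rfl]
      simp only [coc, ih (T ω), Function.iterate_succ', Function.comp_apply, mul_assoc, ← Function.iterate_succ_apply, Function.iterate_succ_apply']

lemma cocNorm_add_le {Ω : Type*} (T : Ω → Ω) (A : Ω → SL2) (m n : ℕ) (ω : Ω) :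
    cocNorm T A (m + n) ω ≤ cocNorm T A m (T^[n] ω) + cocNorm T A n ω := by
  unfold cocNorm
  rw [coc_add, ← Real.log_mul (sl2_norm_pos _).ne' (sl2_norm_pos _).ne']
  exact Real.log_le_log (by rw [Matrix.SpecialLinearGroup.coe_mul]; exact (norm_pos_iff.mpr (by
    rw [← Matrix.SpecialLinearGroup.coe_mul]; exact sl2_coe_ne_zero _)))
    (by rw [Matrix.SpecialLinearGroup.coe_mul]; exact norm_mul_le _ _)

lemma sl2_coe_continuous : Continuous (fun B : SL2 => (B : Matrix (Fin 2) (Fin 2) ℝ)) :=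
  (Isometry.continuous fun _ _ => rfl)

lemma coc_continuous {Ω : Type*} [MetricSpace Ω] [CompactSpace Ω] (T : Ω ≃ₜ Ω) (n : ℕ) :
    Continuous fun p : C(Ω, SL2) × Ω => ((coc (⇑T) (⇑p.1) n p.2 : SL2) : Matrix (Fin 2) (Fin 2) ℝ) := by
  induction n with
  | zero => simpa [coc] using continuous_const
  | succ n ih =>
      simp only [coc, Matrix.SpecialLinearGroup.coe_mul]
      exact (ih.comp (continuous_fst.prodMk (T.continuous.comp continuous_snd))).mul
        (sl2_coe_continuous.comp ContinuousEval.continuous_eval)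

/-- The set of continuous cocycles `A` with `sup_{ω, n ≥ N} (1/n) log‖A_n(ω)‖ < L`
is open in `C(Ω, SL(2,ℝ))` with the uniform topology. -/
theorem isOpen_sup_lt {Ω : Type*} [MetricSpace Ω] [CompactSpace Ω]
    (T : Ω ≃ₜ Ω) (L : ℝ) (hL : 0 < L) (N : ℕ) (hN : 0 < N) :
    IsOpen {A : C(Ω, SL2) | ∃ L' < L, ∀ ω, ∀ n ≥ N,
      (1 / n : ℝ) * cocNorm (⇑T) (⇑A) n ω ≤ L'} := by
  rw [isOpen_iff_forall_mem_open]
  rintro A ⟨L', hL', hA⟩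
  set L'' : ℝ := (L' + L) / 2 with hL''def
  have hL'L'' : L' < L'' := by simp only [hL''def]; linarith
  have hL''L : L'' < L := by simp only [hL''def]; linarith
  have key : ∀ n : ℕ, ∃ u : Set C(Ω, SL2), IsOpen u ∧ A ∈ u ∧
      (N ≤ n → ∀ B ∈ u, ∀ ω, cocNorm (⇑T) (⇑B) n ω ≤ L'' * n) := by
    intro n
    by_cases hn : N ≤ n
    · have hnpos : (0 : ℝ) < n := by exact_mod_cast lt_of_lt_of_le hN hn
      set W : Set (C(Ω, SL2) × Ω) :=
        {p | ‖(coc (⇑T) (⇑p.1) n p.2 : Matrix (Fin 2) (Fin 2) ℝ)‖ < Real.exp (L'' * n)} with hW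
      have hopen : IsOpen W :=
        isOpen_lt (continuous_norm.comp (coc_continuous T n)) continuous_const
      have hsub : ({A} : Set C(Ω, SL2)) ×ˢ (Set.univ : Set Ω) ⊆ W := by
        rintro ⟨B, ω⟩ ⟨rfl, -⟩
        have h1 : cocNorm (⇑T) (⇑B) n ω ≤ L' * n := by
          have h := hA ω n hn
          rw [div_mul_eq_mul_div, one_mul, div_le_iff₀ hnpos] at h
          linarith [h]
        have h2 : ‖(coc (⇑T) (⇑B) n ω : Matrix (Fin 2) (Fin 2) ℝ)‖
            = Real.exp (cocNorm (⇑T) (⇑B) n ω) := (Real.exp_log (sl2_norm_pos _)).symm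
        simp only [hW, Set.mem_setOf_eq, h2]
        exact Real.exp_lt_exp.mpr (lt_of_le_of_lt h1 (by nlinarith))
      obtain ⟨u, v, hu, _, hAu, hvuniv, huv⟩ :=
        generalized_tube_lemma isCompact_singleton isCompact_univ hopen hsub
      refine ⟨u, hu, hAu rfl, fun _ B hB ω => ?_⟩
      have hmem : (B, ω) ∈ W := huv (Set.mk_mem_prod hB (hvuniv (Set.mem_univ ω)))
      simp only [hW, Set.mem_setOf_eq] at hmem
      have := Real.log_le_log (sl2_norm_pos _) hmem.le
      rwa [Real.log_exp] at this
    · exact ⟨Set.univ, isOpen_univ, Set.mem_univ _, fun h => absurd h hn⟩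
  choose u huo hAu hub using key
  refine ⟨⋂ n ∈ Finset.Icc N (2 * N), u n, ?_, ?_, ?_⟩
  · intro B hB
    simp only [Set.mem_iInter] at hB
    have claim : ∀ n, N ≤ n → ∀ ω, cocNorm (⇑T) (⇑B) n ω ≤ L'' * n := by
      intro n
      induction n using Nat.strong_induction_on with
      | _ n ih =>
        intro hn ω
        by_cases hcase : n ≤ 2 * N
        · exact hub n hn B (hB n (Finset.mem_Icc.mpr ⟨hn, hcase⟩)) ω
        · have h1 : N ≤ n - N := by omega
          have h2 : n - N < n := by omega
          have hdecomp : (n - N) + N = n := by omega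
          calc cocNorm (⇑T) (⇑B) n ω = cocNorm (⇑T) (⇑B) ((n - N) + N) ω := by rw [hdecomp]
            _ ≤ cocNorm (⇑T) (⇑B) (n - N) ((⇑T)^[N] ω) + cocNorm (⇑T) (⇑B) N ω :=
                cocNorm_add_le _ _ _ _ _
            _ ≤ L'' * (n - N : ℕ) + L'' * N :=
                add_le_add (ih (n - N) h2 h1 _)
                  (hub N le_rfl B (hB N (Finset.mem_Icc.mpr ⟨le_rfl, by omega⟩)) ω)
            _ = L'' * n := by
                rw [← mul_add, ← Nat.cast_add, hdecomp]
    refine ⟨L'', hL''L, fun ω n hn => ?_⟩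
    have hnpos : (0 : ℝ) < n := by exact_mod_cast lt_of_lt_of_le hN hn
    have := claim n hn ω
    rw [div_mul_eq_mul_div, one_mul, div_le_iff₀ hnpos]
    linarith
  · exact isOpen_biInter_finset fun n _ => huo n
  · exact Set.mem_iInter₂.mpr fun n _ => hAu n
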